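/- Let $G$ be a $d$-closed graph on $n$ vertices with minimum degree at least $\delta$, and suppose $G$ contains a clique of size at least $d + (n - 1 - \delta)$. Then $G$ is the complete graph. -/

import Mathlib

open scoped Classical

/-- The rigidity matrix of a framework `(G, p)` in `ℝ^d`. -/
noncomputable def rigidityMatrix {V : Type*} (G : SimpleGraph V) (d : ℕ)
    (p : V → Fin d → ℝ) : Matrix G.edgeSet (V × Fin d) ℝ :=
  fun e wi =>
    if h : wi.1 ∈ (e : Sym2 V) then p wi.1 wi.2 - p (Sym2.Mem.other h) wi.2 else 0

/-- An embedding is generic if its `d|V|` coordinates are algebraically independent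
over the rationals. -/
def IsGenericEmbedding {V : Type*} {d : ℕ} (p : V → Fin d → ℝ) : Prop :=
  AlgebraicIndependent ℚ (fun vi : V × Fin d => p vi.1 vi.2)

/-- A graph is `d`-closed if it equals its own `d`-rigidity closure: whenever adding a
non-edge `{u,v}` does not increase the rank of the generic rigidity matrix, `{u,v}` is
already an edge of `G`. -/
def IsDClosed {V : Type*} [Fintype V] (d : ℕ) (G : SimpleGraph V) : Prop :=
  ∀ u v : V, u ≠ v →
    (∀ p : V → Fin d → ℝ, IsGenericEmbedding p →
      (rigidityMatrix (G ⊔ SimpleGraph.fromEdgeSet {Sym2.mk u v}) d p).rank =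
        (rigidityMatrix G d p).rank) →
    G.Adj u v

/-! ### Auxiliary material -/

/-- The dot product on `ι → ℝ`. -/
noncomputable def dotp {ι : Type*} [Fintype ι] (x y : ι → ℝ) : ℝ := ∑ i, x i * y i

lemma dotp_add_left {ι : Type*} [Fintype ι] (x y z : ι → ℝ) :
    dotp (x + y) z = dotp x z + dotp y z := by
  simp [dotp, add_mul, Finset.sum_add_distrib]

lemma dotp_smul_left {ι : Type*} [Fintype ι] (c : ℝ) (x z : ι → ℝ) :
    dotp (c • x) z = c * dotp x z := by
  simp [dotp, Finset.mul_sum, mul_assoc]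

lemma dotp_comm {ι : Type*} [Fintype ι] (x y : ι → ℝ) : dotp x y = dotp y x := by
  simp [dotp, mul_comm]

lemma dotp_add_right {ι : Type*} [Fintype ι] (x y z : ι → ℝ) :
    dotp x (y + z) = dotp x y + dotp x z := by
  rw [dotp_comm, dotp_add_left, dotp_comm y x, dotp_comm z x]

lemma dotp_smul_right {ι : Type*} [Fintype ι] (c : ℝ) (x z : ι → ℝ) :
    dotp x (c • z) = c * dotp x z := by
  rw [dotp_comm, dotp_smul_left, dotp_comm z x]

lemma dotp_sub_left {ι : Type*} [Fintype ι] (x y z : ι → ℝ) :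
    dotp (x - y) z = dotp x z - dotp y z := by
  simp [dotp, sub_mul, Finset.sum_sub_distrib]

lemma dotp_sub_right {ι : Type*} [Fintype ι] (x y z : ι → ℝ) :
    dotp x (y - z) = dotp x y - dotp x z := by
  rw [dotp_comm, dotp_sub_left, dotp_comm y x, dotp_comm z x]

lemma eq_zero_of_dotp_self {ι : Type*} [Fintype ι] (x : ι → ℝ) (h : dotp x x = 0) :
    x = 0 := by
  funext i
  have h2 : ∀ j ∈ Finset.univ, (0:ℝ) ≤ x j * x j := fun j _ => mul_self_nonneg _
  have h3 := (Finset.sum_eq_zero_iff_of_nonneg h2).1 h i (Finset.mem_univ i)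
  have := mul_self_eq_zero.1 h3
  simpa using this

/-- Membership in the span via orthogonality to all common annihilators. -/
lemma mem_span_of_forall_dot {ι : Type*} [Fintype ι] (S : Set (ι → ℝ)) (r : ι → ℝ)
    (h : ∀ q : ι → ℝ, (∀ s ∈ S, dotp s q = 0) → dotp r q = 0) :
    r ∈ Submodule.span ℝ S := by
  let e : (ι → ℝ) ≃ₗ[ℝ] EuclideanSpace ℝ ι := (WithLp.linearEquiv 2 ℝ (ι → ℝ)).symm
  have hinner : ∀ x y : ι → ℝ, (inner ℝ (e x) (e y) : ℝ) = dotp x y := by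
    intro x y
    simp [e, PiLp.inner_apply, RCLike.inner_apply, dotp, mul_comm]
  have hmem : e r ∈ Submodule.span ℝ (⇑e.toLinearMap '' S) := by
    rw [← Submodule.orthogonal_orthogonal (Submodule.span ℝ (⇑e.toLinearMap '' S))]
    refine (Submodule.mem_orthogonal _ _).2 fun q hq => ?_
    have h1 : ∀ s ∈ S, dotp s (e.symm q) = 0 := by
      intro s hs
      have h0 := hq (e s) (Submodule.subset_span ⟨s, hs, rfl⟩)
      rw [← e.apply_symm_apply q, hinner s (e.symm q)] at h0
      exact h0
    have h2 := h (e.symm q) h1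
    rw [← hinner r (e.symm q), e.apply_symm_apply] at h2
    rw [real_inner_comm]
    exact h2
  rw [Submodule.span_image] at hmem
  obtain ⟨y, hy, hey⟩ := hmem
  have : y = r := e.injective hey
  exact this ▸ hy

/-- Generic points give linearly independent difference vectors. -/
lemma generic_li {V : Type*} {d : ℕ} (p : V → Fin d → ℝ)
    (hp : IsGenericEmbedding p) (u : Fin d → V) (z : V) (hu : Function.Injective u)
    (hz : ∀ i, z ≠ u i) :
    LinearIndependent ℝ (fun i => (fun j => p (u i) j - p z j : Fin d → ℝ)) := by
  have hp' : AlgebraicIndependent ℚ (fun vi : V × Fin d => p vi.1 vi.2) := hp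
  set M : Matrix (Fin d) (Fin d) ℝ := Matrix.of fun i j => p (u i) j - p z j with hM
  have hdet : M.det ≠ 0 := by
    set D : Matrix (Fin d) (Fin d) (MvPolynomial (V × Fin d) ℚ) :=
      Matrix.of fun i j => (MvPolynomial.X (u i, j) - MvPolynomial.X (z, j)) with hD
    have h1 : (MvPolynomial.aeval (fun vi : V × Fin d => p vi.1 vi.2)) D.det = M.det := by
      rw [AlgHom.map_det]
      congr 1
      ext i j
      simp [hD, hM, Matrix.map_apply]
    have h2 : D.det ≠ 0 := by
      intro h0
      have h3 := congrArg
        (MvPolynomial.eval (fun vi : V × Fin d => if vi.1 = u vi.2 then (1:ℚ) else 0)) h0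
      rw [RingHom.map_det, map_zero, RingHom.mapMatrix_apply] at h3
      have h4 : D.map (MvPolynomial.eval
          (fun vi : V × Fin d => if vi.1 = u vi.2 then (1:ℚ) else 0))
          = (1 : Matrix (Fin d) (Fin d) ℚ) := by
        ext i j
        simp only [Matrix.map_apply, hD, Matrix.of_apply, map_sub, MvPolynomial.eval_X]
        by_cases hij : i = j
        · subst hij
          simp [Matrix.one_apply_eq, if_neg (hz i)]
        · simp [Matrix.one_apply_ne hij, hu.ne hij, hz j]
      rw [h4, Matrix.det_one] at h3
      exact one_ne_zero h3
    intro hMdet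
    exact h2 (hp'.eq_zero_of_aeval_eq_zero _ (by rw [h1, hMdet]))
  have hunit : IsUnit M := (Matrix.isUnit_iff_isUnit_det M).2 (isUnit_iff_ne_zero.2 hdet)
  exact Matrix.linearIndependent_rows_iff_isUnit.2 hunit

/-- The core infinitesimal-rigidity computation: an infinitesimal flex of the complete
graph on `d + 2` suitably generic points minus one edge also preserves that edge. -/
lemma core_flex {d : ℕ} (P : Fin d → (Fin d → ℝ)) (Pv Pw : Fin d → ℝ)
    (Q : Fin d → (Fin d → ℝ)) (Qv Qw : Fin d → ℝ)
    (hb : LinearIndependent ℝ (fun i => P i - Pv))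
    (hx : LinearIndependent ℝ (fun i => Pw - P i))
    (hUU : ∀ i j, dotp (P i - P j) (Q i - Q j) = 0)
    (hvU : ∀ i, dotp (Pv - P i) (Qv - Q i) = 0)
    (hwU : ∀ i, dotp (Pw - P i) (Qw - Q i) = 0) :
    dotp (Pv - Pw) (Qv - Qw) = 0 := by
  rcases Nat.eq_zero_or_pos d with hd | hd
  · subst hd
    simp [dotp]
  haveI : Nonempty (Fin d) := ⟨⟨0, hd⟩⟩
  have hcard : Fintype.card (Fin d) = Module.finrank ℝ (Fin d → ℝ) := by
    simp [Module.finrank_fintype_fun_eq_card]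
  let b : Module.Basis (Fin d) ℝ (Fin d → ℝ) := basisOfLinearIndependentOfCardEqFinrank hb hcard
  have hbco : ∀ i, b i = P i - Pv := fun i => by
    rw [show b = basisOfLinearIndependentOfCardEqFinrank hb hcard from rfl,
      coe_basisOfLinearIndependentOfCardEqFinrank]
  let L : (Fin d → ℝ) →ₗ[ℝ] (Fin d → ℝ) := b.constr ℝ (fun i => Q i - Qv)
  have hL : ∀ i, L (P i - Pv) = Q i - Qv := by
    intro i
    rw [← hbco]
    exact b.constr_basis ℝ _ i
  have hpair : ∀ i j, dotp (P i - Pv) (L (P j - Pv)) + dotp (P j - Pv) (L (P i - Pv)) = 0 := by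
    intro i j
    rw [hL, hL]
    have h1 := hUU i j
    have h2 := hvU i
    have h3 := hvU j
    simp only [dotp_sub_left, dotp_sub_right] at h1 h2 h3 ⊢
    linarith
  let B : (Fin d → ℝ) →ₗ[ℝ] (Fin d → ℝ) →ₗ[ℝ] ℝ :=
    LinearMap.mk₂ ℝ (fun x y => dotp x (L y) + dotp y (L x))
      (fun x x' y => by
        show dotp (x + x') (L y) + dotp y (L (x + x'))
          = (dotp x (L y) + dotp y (L x)) + (dotp x' (L y) + dotp y (L x'))
        rw [dotp_add_left, map_add, dotp_add_right]; ring)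
      (fun c x y => by
        show dotp (c • x) (L y) + dotp y (L (c • x))
          = c • (dotp x (L y) + dotp y (L x))
        rw [dotp_smul_left, map_smul, dotp_smul_right, smul_eq_mul]; ring)
      (fun x y y' => by
        show dotp x (L (y + y')) + dotp (y + y') (L x)
          = (dotp x (L y) + dotp y (L x)) + (dotp x (L y') + dotp y' (L x))
        rw [map_add, dotp_add_right, dotp_add_left]; ring)
      (fun c x y => by
        show dotp x (L (c • y)) + dotp (c • y) (L x)
          = c • (dotp x (L y) + dotp y (L x))
        rw [map_smul, dotp_smul_right, dotp_smul_left, smul_eq_mul]; ring)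
  have hB : B = 0 := by
    apply b.ext
    intro i
    apply b.ext
    intro j
    simp only [LinearMap.zero_apply]
    show dotp (b i) (L (b j)) + dotp (b j) (L (b i)) = 0
    rw [hbco, hbco]
    exact hpair i j
  have hq0 : ∀ x, dotp x (L x) = 0 := by
    intro x
    have hBx : B x x = 0 := by rw [hB]; rfl
    have : dotp x (L x) + dotp x (L x) = 0 := hBx
    linarith
  set c : Fin d → ℝ := (Qw - Qv) - L (Pw - Pv) with hc
  have hcperp : ∀ i, dotp (Pw - P i) c = 0 := by
    intro i
    have h1 := hwU i
    have e2 : Qw - Q i = c + L (Pw - P i) := by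
      have hmap : L (Pw - P i) = L (Pw - Pv) - L (P i - Pv) := by
        rw [← map_sub]
        congr 1
        abel
      rw [hmap, hL i, hc]
      abel
    rw [e2, dotp_add_right] at h1
    have := hq0 (Pw - P i)
    linarith
  have hc0 : c = 0 := by
    let b2 : Module.Basis (Fin d) ℝ (Fin d → ℝ) := basisOfLinearIndependentOfCardEqFinrank hx hcard
    have hbco2 : ∀ i, b2 i = Pw - P i := fun i => by
      rw [show b2 = basisOfLinearIndependentOfCardEqFinrank hx hcard from rfl,
        coe_basisOfLinearIndependentOfCardEqFinrank]
    let f : (Fin d → ℝ) →ₗ[ℝ] ℝ :=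
      { toFun := fun x => dotp x c
        map_add' := fun x y => dotp_add_left x y c
        map_smul' := fun r x => by simp [dotp_smul_left] }
    have hf : f = 0 := by
      apply b2.ext
      intro i
      simp only [LinearMap.zero_apply]
      show dotp (b2 i) c = 0
      rw [hbco2]
      exact hcperp i
    have hfc : dotp c c = 0 := by
      have : f c = 0 := by rw [hf]; rfl
      exact this
    exact eq_zero_of_dotp_self c hfc
  have e3 : Qv - Qw = -(c + L (Pw - Pv)) := by rw [hc]; abel
  rw [e3, hc0]
  have e4 : Pv - Pw = -(Pw - Pv) := by abel
  rw [e4]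
  have e5 : dotp (-(Pw - Pv)) (-((0 : Fin d → ℝ) + L (Pw - Pv)))
      = dotp (Pw - Pv) (L (Pw - Pv)) := by
    rw [zero_add]
    simp only [dotp, Pi.neg_apply, neg_mul_neg]
  rw [e5]
  exact hq0 _

/-- The row of the rigidity matrix associated to an edge. -/
noncomputable def rowFun {V : Type*} {d : ℕ} (p : V → Fin d → ℝ) (e : Sym2 V) :
    V × Fin d → ℝ :=
  fun wi => if h : wi.1 ∈ e then p wi.1 wi.2 - p (Sym2.Mem.other h) wi.2 else 0

lemma dot_rowFun {V : Type*} [Fintype V] [DecidableEq V] {d : ℕ} (p : V → Fin d → ℝ)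
    (q : V × Fin d → ℝ) (a b : V) (hab : a ≠ b) :
    dotp (rowFun p s(a, b)) q = ∑ i, (p a i - p b i) * (q (a, i) - q (b, i)) := by
  have ha : a ∈ s(a, b) := by rw [Sym2.mem_iff]; left; rfl
  have hb : b ∈ s(a, b) := by rw [Sym2.mem_iff]; right; rfl
  have hoa : ∀ (h : a ∈ s(a, b)), Sym2.Mem.other h = b := fun h =>
    Sym2.congr_right.mp (Sym2.other_spec h)
  have hob : ∀ (h : b ∈ s(a, b)), Sym2.Mem.other h = a := fun h =>
    Sym2.congr_right.mp ((Sym2.other_spec h).trans Sym2.eq_swap)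
  rw [dotp, Fintype.sum_prod_type]
  have hzero : ∀ x ∈ Finset.univ, x ∉ ({a, b} : Finset V) →
      (∑ i, rowFun p s(a, b) (x, i) * q (x, i)) = 0 := by
    intro x _ hx
    simp only [Finset.mem_insert, Finset.mem_singleton, not_or] at hx
    apply Finset.sum_eq_zero
    intro i _
    have hxm : ¬ ((x, i).1 ∈ s(a, b)) := by
      rw [Sym2.mem_iff]
      push_neg
      exact hx
    rw [rowFun, dif_neg hxm, zero_mul]
  calc ∑ x, ∑ i, rowFun p s(a, b) (x, i) * q (x, i)
      = ∑ x ∈ ({a, b} : Finset V), ∑ i, rowFun p s(a, b) (x, i) * q (x, i) :=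
        (Finset.sum_subset (Finset.subset_univ _) hzero).symm
    _ = (∑ i, rowFun p s(a, b) (a, i) * q (a, i))
        + ∑ i, rowFun p s(a, b) (b, i) * q (b, i) := Finset.sum_pair hab
    _ = ∑ i, (p a i - p b i) * (q (a, i) - q (b, i)) := by
        have h1 : ∀ i : Fin d, rowFun p s(a, b) (a, i) = p a i - p b i := by
          intro i
          rw [rowFun, dif_pos ha, hoa ha]
        have h2 : ∀ i : Fin d, rowFun p s(a, b) (b, i) = p b i - p a i := by
          intro i
          rw [rowFun, dif_pos hb, hob hb]
        simp only [h1, h2]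
        rw [← Finset.sum_add_distrib]
        apply Finset.sum_congr rfl
        intro i _
        ring

lemma range_rigidityMatrix {V : Type*} [Fintype V] {d : ℕ} (H : SimpleGraph V)
    (p : V → Fin d → ℝ) :
    Set.range (rigidityMatrix H d p) = rowFun p '' H.edgeSet := by
  have h0 : rigidityMatrix H d p = rowFun p ∘ (fun e : H.edgeSet => (e : Sym2 V)) := rfl
  rw [h0, Set.range_comp, Subtype.range_coe]

/-- The key rigidity lemma: if `v` and `w` are both adjacent to all vertices of a
`d`-clique, then adding the edge `vw` does not increase the generic rank. -/
lemma rank_aux {V : Type*} [Fintype V] [DecidableEq V] (d : ℕ) (G : SimpleGraph V)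
    (v w : V) (hvw : v ≠ w) (u : Fin d → V) (hu : Function.Injective u)
    (hv : ∀ i, v ≠ u i) (hw : ∀ i, w ≠ u i)
    (hUc : ∀ i j, i ≠ j → G.Adj (u i) (u j))
    (hvU : ∀ i, G.Adj v (u i)) (hwU : ∀ i, G.Adj w (u i))
    (p : V → Fin d → ℝ) (hp : IsGenericEmbedding p) :
    (rigidityMatrix (G ⊔ SimpleGraph.fromEdgeSet {Sym2.mk v w}) d p).rank =
      (rigidityMatrix G d p).rank := by
  rw [Matrix.rank_eq_finrank_span_row, Matrix.rank_eq_finrank_span_row,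
    Matrix.row, Matrix.row, range_rigidityMatrix, range_rigidityMatrix]
  have hE : (G ⊔ SimpleGraph.fromEdgeSet {Sym2.mk v w}).edgeSet
      = G.edgeSet ∪ {s(v, w)} := by
    rw [SimpleGraph.edgeSet_sup, SimpleGraph.edgeSet_fromEdgeSet]
    congr 1
    ext e
    simp only [Set.mem_diff, Set.mem_singleton_iff, Set.mem_setOf_eq]
    constructor
    · exact fun h => h.1
    · rintro rfl
      exact ⟨rfl, fun hdiag => hvw (Sym2.mk_isDiag_iff.1 hdiag)⟩
  rw [hE, Set.image_union, Set.image_singleton]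
  have hmem : rowFun p s(v, w) ∈ Submodule.span ℝ (rowFun p '' G.edgeSet) := by
    apply mem_span_of_forall_dot
    intro q hq
    have hcon : ∀ a b : V, G.Adj a b →
        ∑ i, (p a i - p b i) * (q (a, i) - q (b, i)) = 0 := by
      intro a b hab
      have h0 := hq (rowFun p s(a, b)) ⟨s(a, b), (SimpleGraph.mem_edgeSet G).2 hab, rfl⟩
      rwa [dot_rowFun p q a b hab.ne] at h0
    rw [dot_rowFun p q v w hvw]
    -- set up the core lemma
    let P : V → (Fin d → ℝ) := fun x => p x
    let Q : V → (Fin d → ℝ) := fun x => fun i => q (x, i)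
    have hdot : ∀ a b : V, dotp (P a - P b) (Q a - Q b)
        = ∑ i, (p a i - p b i) * (q (a, i) - q (b, i)) := by
      intro a b
      apply Finset.sum_congr rfl
      intro i _
      rfl
    have hb : LinearIndependent ℝ (fun i => P (u i) - P v) :=
      generic_li p hp u v hu hv
    have hx : LinearIndependent ℝ (fun i => P w - P (u i)) := by
      have hli := generic_li p hp u w hu hw
      have hli2 := hli.map' (LinearEquiv.neg ℝ).toLinearMap (LinearEquiv.ker _)
      have hfun : (⇑(LinearEquiv.neg ℝ (M := Fin d → ℝ)).toLinearMap
          ∘ fun i => (fun j => p (u i) j - p w j : Fin d → ℝ))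
          = fun i => P w - P (u i) := by
        funext i j
        show (-(fun j => p (u i) j - p w j : Fin d → ℝ)) j = (P w - P (u i)) j
        simp [P]
      rwa [hfun] at hli2
    have := core_flex (fun i => P (u i)) (P v) (P w) (fun i => Q (u i)) (Q v) (Q w)
      hb hx
      (fun i j => by
        by_cases hij : i = j
        · subst hij; simp [dotp]
        · rw [hdot]; exact hcon _ _ (hUc i j hij))
      (fun i => by rw [hdot]; exact hcon _ _ (hvU i))
      (fun i => by rw [hdot]; exact hcon _ _ (hwU i))
    rw [hdot] at this
    exact this
  have hle : Submodule.span ℝ {rowFun p s(v, w)}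
      ≤ Submodule.span ℝ (rowFun p '' G.edgeSet) :=
    (Submodule.span_singleton_le_iff_mem _ _).2 hmem
  rw [Submodule.span_union, sup_of_le_left hle]

/-- Lemma 3.3. Let `G` be a `d`-closed graph on `n` vertices with
minimum degree at least `δ`, containing a clique of size at least `d + (n - 1 - δ)`.
Then `G` is the complete graph. -/
theorem stmt_11 {V : Type*} [Fintype V] [DecidableEq V] (d δ n : ℕ)
    (hn : Fintype.card V = n) (hcard : d + 1 ≤ n) (G : SimpleGraph V)
    [DecidableRel G.Adj] (hclosed : IsDClosed d G)
    (hδ : ∀ v : V, δ ≤ G.degree v)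
    (S : Finset V) (hS : G.IsClique (S : Set V))
    (hScard : (d : ℝ) + ((n : ℝ) - 1 - (δ : ℝ)) ≤ (S.card : ℝ)) :
    G = ⊤ := by
  have hnpos : 0 < n := by omega
  have hV : Nonempty V := Fintype.card_pos_iff.1 (by rw [hn]; exact hnpos)
  obtain ⟨v0⟩ := hV
  have hδn : δ ≤ n - 1 := by
    have h1 := hδ v0
    have h2 : G.degree v0 < Fintype.card V := G.degree_lt_card_verts v0
    omega
  have hScard' : d + (n - 1 - δ) ≤ S.card := by
    have hcast : ((d + (n - 1 - δ) : ℕ) : ℝ) = (d : ℝ) + ((n : ℝ) - 1 - (δ : ℝ)) := by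
      have h1 : (((n - 1 - δ) : ℕ) : ℝ) = (n : ℝ) - 1 - (δ : ℝ) := by
        have : n - 1 - δ + δ + 1 = n := by omega
        have := congrArg (fun m : ℕ => (m : ℝ)) this
        push_cast at this
        linarith
      push_cast [h1]
      push_cast at h1
      linarith
    exact_mod_cast hcast ▸ hScard
  have hdS : d ≤ S.card := by omega
  -- counting: every vertex outside `S` has at least `d` neighbors in `S`
  have hcount : ∀ v : V, v ∉ S → d ≤ (S ∩ G.neighborFinset v).card := by
    intro v hv
    have hsub : S \ G.neighborFinset v ⊆ Finset.univ \ insert v (G.neighborFinset v) := by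
      intro x hx
      rw [Finset.mem_sdiff] at hx
      rw [Finset.mem_sdiff, Finset.mem_insert]
      refine ⟨Finset.mem_univ x, ?_⟩
      push_neg
      exact ⟨fun hxv => hv (hxv ▸ hx.1), hx.2⟩
    have h1 : (S \ G.neighborFinset v).card ≤ n - 1 - δ := by
      have h2 := Finset.card_le_card hsub
      rw [Finset.card_sdiff_of_subset (Finset.subset_univ _),
        Finset.card_insert_of_notMem (G.notMem_neighborFinset_self v),
        Finset.card_univ, hn, SimpleGraph.card_neighborFinset_eq_degree] at h2
      have h3 := hδ v
      omega
    have h4 := Finset.card_inter_add_card_sdiff S (G.neighborFinset v)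
    omega
  -- key application of `d`-closedness
  have hadj : ∀ v w : V, v ≠ w → ∀ U : Finset V, U.card = d → U ⊆ S →
      v ∉ U → w ∉ U → (∀ x ∈ U, G.Adj v x) → (∀ x ∈ U, G.Adj w x) → G.Adj v w := by
    intro v w hvw U hUcard hUS hvnU hwnU havU hawU
    apply hclosed v w hvw
    intro p hp
    let eU := U.equivFinOfCardEq hUcard
    let u : Fin d → V := fun i => (eU.symm i : V)
    have hu : Function.Injective u := by
      intro i j hij
      exact eU.symm.injective (Subtype.val_injective hij)
    have huU : ∀ i, u i ∈ U := fun i => (eU.symm i).2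
    apply rank_aux d G v w hvw u hu
      (fun i hvi => hvnU (hvi ▸ huU i))
      (fun i hwi => hwnU (hwi ▸ huU i))
      (fun i j hij => hS (hUS (huU i)) (hUS (huU j)) (fun h => hij (hu h)))
      (fun i => havU _ (huU i))
      (fun i => hawU _ (huU i))
      p hp
  -- every vertex outside `S` is adjacent to every vertex of `S`
  have hstepB : ∀ v : V, v ∉ S → ∀ s ∈ S, G.Adj v s := by
    intro v hv s hs
    by_cases hadjvs : G.Adj v s
    · exact hadjvs
    have hvs : v ≠ s := fun h => hv (h ▸ hs)
    obtain ⟨U, hUsub, hUcard⟩ := Finset.exists_subset_card_eq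
      (hcount v hv)
    have hUS : U ⊆ S := hUsub.trans (Finset.inter_subset_left)
    have hUN : U ⊆ G.neighborFinset v := hUsub.trans (Finset.inter_subset_right)
    refine hadj v s hvs U hUcard hUS ?_ ?_ ?_ ?_
    · intro hvU
      exact G.notMem_neighborFinset_self v (hUN hvU)
    · intro hsU
      exact hadjvs (G.mem_neighborFinset v s |>.1 (hUN hsU))
    · intro x hx
      exact (G.mem_neighborFinset v x).1 (hUN hx)
    · intro x hx
      refine hS hs (hUS hx) ?_
      intro hsx
      exact hadjvs (hsx ▸ (G.mem_neighborFinset v x).1 (hUN hx))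
  -- conclusion
  ext a b
  simp only [SimpleGraph.top_adj]
  constructor
  · exact fun h => h.ne
  intro hab
  by_cases haS : a ∈ S
  · by_cases hbS : b ∈ S
    · exact hS haS hbS hab
    · exact (hstepB b hbS a haS).symm
  · by_cases hbS : b ∈ S
    · exact hstepB a haS b hbS
    · obtain ⟨U, hUsub, hUcard⟩ := Finset.exists_subset_card_eq hdS
      refine hadj a b hab U hUcard hUsub (fun h => haS (hUsub h)) (fun h => hbS (hUsub h))
        ?_ ?_
      · exact fun x hx => hstepB a haS x (hUsub hx)
      · exact fun x hx => hstepB b hbS x (hUsub hx)
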